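/- The circulant graph on 13 vertices with distance set {1,5} is a doubly saturated R(3,5)-good graph. -/

import Mathlib

/-- The cyclic distance ‖x‖ = min(x mod n, n − (x mod n)) for x ∈ ℤ/nℤ. -/
def cyclicDist (n : ℕ) (x : ZMod n) : ℕ := min x.val (n - x.val)

/-- The circulant graph on `ZMod n` with distance set `S`: `x ~ y` iff `‖x - y‖ ∈ S`. -/
def circ (n : ℕ) (S : Set ℕ) : SimpleGraph (ZMod n) :=
  SimpleGraph.fromRel (fun x y => cyclicDist n (x - y) ∈ S)

/-- `G` is `R(s,t)`-good: no clique of size `s` and no independent set of size `t`. -/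
def RGood {V : Type*} (s t : ℕ) (G : SimpleGraph V) : Prop :=
  G.CliqueFree s ∧ Gᶜ.CliqueFree t

/-- `G` is doubly saturated `R(s,t)`-good. -/
def DoublySaturated {V : Type*} (s t : ℕ) (G : SimpleGraph V) : Prop :=
  RGood s t G ∧
  (∀ u v : V, u ≠ v → ¬ G.Adj u v → ¬ (G ⊔ SimpleGraph.edge u v).CliqueFree s) ∧
  (∀ u v : V, G.Adj u v → ¬ ((G.deleteEdges {s(u, v)})ᶜ.CliqueFree t)) ∧
  G ≠ ⊤ ∧ Gᶜ ≠ ⊤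

/-! ### Auxiliary machinery -/

instance circDec : DecidableRel (circ 13 {1, 5}).Adj := fun x y => by
  unfold circ cyclicDist
  simp only [SimpleGraph.fromRel_adj, Set.mem_insert_iff, Set.mem_singleton_iff]
  infer_instance

/-- Fast boolean adjacency for the circulant graph. -/
def adjB (a b : ZMod 13) : Bool :=
  let d := (a.val + 13 - b.val) % 13
  d == 1 || d == 5 || d == 8 || d == 12

/-- Fast boolean adjacency for the complement. -/
def nadjB (a b : ZMod 13) : Bool := !(adjB a b) && !(a.val == b.val)

lemma adj_iff : ∀ a b : ZMod 13, (circ 13 {1, 5}).Adj a b ↔ adjB a b = true := by decide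

lemma nadj_iff : ∀ a b : ZMod 13, (circ 13 {1, 5})ᶜ.Adj a b ↔ nadjB a b = true := by decide

instance : LinearOrder (ZMod 13) := LinearOrder.lift' ZMod.val (ZMod.val_injective 13)

lemma lt_iff_val {a b : ZMod 13} : a < b ↔ a.val < b.val := by
  rw [lt_iff_le_not_ge, Nat.lt_iff_le_not_le]; exact Iff.rfl

/-- `CliqueFree 3` from the sorted-triple criterion. -/
lemma cliqueFree_three {V : Type*} [LinearOrder V] (G : SimpleGraph V)
    (h : ∀ a b c : V, a < b → b < c → ¬(G.Adj a b ∧ G.Adj a c ∧ G.Adj b c)) :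
    G.CliqueFree 3 := by
  intro s hs
  obtain ⟨hc, hcard⟩ := hs
  let o := s.orderIsoOfFin hcard
  have h01 : (o 0 : V) < o 1 := Subtype.coe_lt_coe.2 (o.strictMono (by decide))
  have h12 : (o 1 : V) < o 2 := Subtype.coe_lt_coe.2 (o.strictMono (by decide))
  have h02 : (o 0 : V) < o 2 := h01.trans h12
  exact h _ _ _ h01 h12
    ⟨hc (o 0).2 (o 1).2 h01.ne, hc (o 0).2 (o 2).2 h02.ne, hc (o 1).2 (o 2).2 h12.ne⟩

/-- `CliqueFree 5` from the sorted-quintuple criterion. -/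
lemma cliqueFree_five {V : Type*} [LinearOrder V] (G : SimpleGraph V)
    (h : ∀ a b c d e : V, a < b → b < c → c < d → d < e →
      ¬(G.Adj a b ∧ G.Adj a c ∧ G.Adj a d ∧ G.Adj a e ∧ G.Adj b c ∧ G.Adj b d ∧
        G.Adj b e ∧ G.Adj c d ∧ G.Adj c e ∧ G.Adj d e)) :
    G.CliqueFree 5 := by
  intro s hs
  obtain ⟨hc, hcard⟩ := hs
  let o := s.orderIsoOfFin hcard
  have h01 : (o 0 : V) < o 1 := Subtype.coe_lt_coe.2 (o.strictMono (by decide))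
  have h12 : (o 1 : V) < o 2 := Subtype.coe_lt_coe.2 (o.strictMono (by decide))
  have h23 : (o 2 : V) < o 3 := Subtype.coe_lt_coe.2 (o.strictMono (by decide))
  have h34 : (o 3 : V) < o 4 := Subtype.coe_lt_coe.2 (o.strictMono (by decide))
  have h02 := h01.trans h12
  have h03 := h02.trans h23
  have h04 := h03.trans h34
  have h13 := h12.trans h23
  have h14 := h13.trans h34
  have h24 := h23.trans h34
  exact h _ _ _ _ _ h01 h12 h23 h34
    ⟨hc (o 0).2 (o 1).2 h01.ne, hc (o 0).2 (o 2).2 h02.ne, hc (o 0).2 (o 3).2 h03.ne,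
     hc (o 0).2 (o 4).2 h04.ne, hc (o 1).2 (o 2).2 h12.ne, hc (o 1).2 (o 3).2 h13.ne,
     hc (o 1).2 (o 4).2 h14.ne, hc (o 2).2 (o 3).2 h23.ne, hc (o 2).2 (o 4).2 h24.ne,
     hc (o 3).2 (o 4).2 h34.ne⟩

/-- A triangle witness refutes `CliqueFree 3`. -/
lemma not_cliqueFree_three {V : Type*} (G : SimpleGraph V) (a b c : V)
    (hab : G.Adj a b) (hac : G.Adj a c) (hbc : G.Adj b c) : ¬ G.CliqueFree 3 := by
  suffices hne : Nonempty ((⊤ : SimpleGraph (Fin 3)) ↪g G) from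
    hne.elim fun f => f.isContained.not_cliqueFree
  refine ⟨⟨⟨fun i => match i with | ⟨0, _⟩ => a | ⟨1, _⟩ => b | ⟨2, _⟩ => c, ?_⟩, ?_⟩⟩
  · intro i j hij
    fin_cases i <;> fin_cases j <;>
      first
        | rfl
        | exact absurd hij hab.ne
        | exact absurd hij hac.ne
        | exact absurd hij hbc.ne
        | exact absurd hij hab.ne'
        | exact absurd hij hac.ne'
        | exact absurd hij hbc.ne'
  · intro i j
    simp only [Function.Embedding.coeFn_mk, SimpleGraph.top_adj]
    constructor
    · intro h
      intro he; subst he; exact G.irrefl h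
    · intro hij
      fin_cases i <;> fin_cases j <;>
        first
          | exact absurd rfl hij
          | exact hab | exact hab.symm
          | exact hac | exact hac.symm
          | exact hbc | exact hbc.symm

/-- A 5-clique witness refutes `CliqueFree 5`. -/
lemma not_cliqueFree_five {V : Type*} (G : SimpleGraph V) (a b c d e : V)
    (hab : G.Adj a b) (hac : G.Adj a c) (had : G.Adj a d) (hae : G.Adj a e)
    (hbc : G.Adj b c) (hbd : G.Adj b d) (hbe : G.Adj b e)
    (hcd : G.Adj c d) (hce : G.Adj c e) (hde : G.Adj d e) : ¬ G.CliqueFree 5 := by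
  suffices hne : Nonempty ((⊤ : SimpleGraph (Fin 5)) ↪g G) from
    hne.elim fun f => f.isContained.not_cliqueFree
  refine ⟨⟨⟨fun i => match i with
      | ⟨0, _⟩ => a | ⟨1, _⟩ => b | ⟨2, _⟩ => c | ⟨3, _⟩ => d | ⟨4, _⟩ => e, ?_⟩, ?_⟩⟩
  · intro i j hij
    fin_cases i <;> fin_cases j <;>
      first
        | rfl
        | exact absurd hij hab.ne | exact absurd hij hab.ne'
        | exact absurd hij hac.ne | exact absurd hij hac.ne'
        | exact absurd hij had.ne | exact absurd hij had.ne'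
        | exact absurd hij hae.ne | exact absurd hij hae.ne'
        | exact absurd hij hbc.ne | exact absurd hij hbc.ne'
        | exact absurd hij hbd.ne | exact absurd hij hbd.ne'
        | exact absurd hij hbe.ne | exact absurd hij hbe.ne'
        | exact absurd hij hcd.ne | exact absurd hij hcd.ne'
        | exact absurd hij hce.ne | exact absurd hij hce.ne'
        | exact absurd hij hde.ne | exact absurd hij hde.ne'
  · intro i j
    simp only [Function.Embedding.coeFn_mk, SimpleGraph.top_adj]
    constructor
    · intro h he; subst he; exact G.irrefl h
    · intro hij
      fin_cases i <;> fin_cases j <;>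
        first
          | exact absurd rfl hij
          | exact hab | exact hab.symm
          | exact hac | exact hac.symm
          | exact had | exact had.symm
          | exact hae | exact hae.symm
          | exact hbc | exact hbc.symm
          | exact hbd | exact hbd.symm
          | exact hbe | exact hbe.symm
          | exact hcd | exact hcd.symm
          | exact hce | exact hce.symm
          | exact hde | exact hde.symm

/-! ### Decidable computations -/

lemma decide3 : ∀ a b c : ZMod 13, a.val < b.val → b.val < c.val →
    ¬(adjB a b = true ∧ adjB a c = true ∧ adjB b c = true) := by decide

set_option maxRecDepth 20000 in
set_option maxHeartbeats 4000000 in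
lemma decide5 : ∀ a b : ZMod 13, a.val < b.val → nadjB a b = true →
    ∀ c : ZMod 13, b.val < c.val → nadjB a c = true → nadjB b c = true →
    ∀ d : ZMod 13, c.val < d.val → nadjB a d = true → nadjB b d = true → nadjB c d = true →
    ∀ e : ZMod 13, d.val < e.val →
    ¬(nadjB a e = true ∧ nadjB b e = true ∧ nadjB c e = true ∧ nadjB d e = true) := by decide

lemma decideAdd : ∀ u v : ZMod 13, u ≠ v → adjB u v = false →
    ∃ c : ZMod 13, adjB u c = true ∧ adjB v c = true := by decide

set_option maxRecDepth 20000 in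
set_option maxHeartbeats 4000000 in
lemma decideDel : ∀ u v : ZMod 13, adjB u v = true →
    ∃ c d e : ZMod 13,
      nadjB u c = true ∧ nadjB u d = true ∧ nadjB u e = true ∧
      nadjB v c = true ∧ nadjB v d = true ∧ nadjB v e = true ∧
      nadjB c d = true ∧ nadjB c e = true ∧ nadjB d e = true := by decide

theorem stmt_11 : DoublySaturated 3 5 (circ 13 {1, 5}) := by
  set G := circ 13 {1, 5} with hG
  refine ⟨⟨?_, ?_⟩, ?_, ?_, ?_, ?_⟩
  · -- CliqueFree 3
    refine cliqueFree_three G fun a b c h1 h2 => ?_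
    rw [lt_iff_val] at h1 h2
    rw [adj_iff, adj_iff, adj_iff]
    exact decide3 a b c h1 h2
  · -- complement CliqueFree 5
    refine cliqueFree_five Gᶜ fun a b c d e h1 h2 h3 h4 => ?_
    rw [lt_iff_val] at h1 h2 h3 h4
    rw [hG]
    simp only [nadj_iff]
    rintro ⟨hab, hac, had, hae, hbc, hbd, hbe, hcd, hce, hde⟩
    exact decide5 a b h1 hab c h2 hac hbc d h3 had hbd hcd e h4 ⟨hae, hbe, hce, hde⟩
  · -- adding an edge creates a triangle
    intro u v huv hnadj
    have hb : adjB u v = false := by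
      rw [← Bool.not_eq_true, ← adj_iff]; exact hnadj
    obtain ⟨c, h1, h2⟩ := decideAdd u v huv hb
    have h1' : G.Adj u c := (adj_iff u c).2 h1
    have h2' : G.Adj v c := (adj_iff v c).2 h2
    refine not_cliqueFree_three _ u v c ?_ (Or.inl h1') (Or.inl h2')
    exact Or.inr (by rw [SimpleGraph.edge_adj]; exact ⟨Or.inl ⟨rfl, rfl⟩, huv⟩)
  · -- deleting an edge creates a 5-independent set
    intro u v hadj
    have hb : adjB u v = true := (adj_iff u v).1 hadj
    obtain ⟨c, d, e, huc, hud, hue, hvc, hvd, hve, hcd, hce, hde⟩ := decideDel u v hb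
    have key : ∀ x y : ZMod 13, nadjB x y = true →
        (G.deleteEdges {s(u, v)})ᶜ.Adj x y := by
      intro x y hxy
      have h' : Gᶜ.Adj x y := (nadj_iff x y).2 hxy
      rw [SimpleGraph.compl_adj] at h' ⊢
      refine ⟨h'.1, fun hcon => h'.2 ?_⟩
      rw [SimpleGraph.deleteEdges_adj] at hcon
      exact hcon.1
    have huv' : (G.deleteEdges {s(u, v)})ᶜ.Adj u v := by
      rw [SimpleGraph.compl_adj]
      refine ⟨hadj.ne, fun hcon => ?_⟩
      rw [SimpleGraph.deleteEdges_adj] at hcon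
      exact hcon.2 rfl
    exact not_cliqueFree_five _ u v c d e huv' (key u c huc) (key u d hud) (key u e hue)
      (key v c hvc) (key v d hvd) (key v e hve) (key c d hcd) (key c e hce) (key d e hde)
  · -- G ≠ ⊤
    intro h
    have h1 : ¬ G.Adj 0 2 := by
      rw [adj_iff]; decide
    rw [h] at h1
    exact h1 ((SimpleGraph.top_adj _ _).2 (by decide))
  · -- Gᶜ ≠ ⊤
    intro h
    have h1 : ¬ Gᶜ.Adj 0 1 := by
      rw [nadj_iff]; decide
    rw [h] at h1
    exact h1 ((SimpleGraph.top_adj _ _).2 (by decide))
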